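/- Sufficient condition for regularity (norm condition): Let A_c, Δ ∈ ℝ^{n×n} with Δ ≥ 0 entrywise, and let ν be a norm on real n×n matrices that is submultiplicative (ν(MN) ≤ ν(M)ν(N) for all M, N). If the symmetric matrix A_c^T A_c − ν(Δ^T Δ)·I is positive definite, then every real matrix A with |A − A_c| ≤ Δ entrywise is invertible. -/

import Mathlib

open Matrix

-- ν is nonnegative
lemma nu_nonneg {n : ℕ} (ν : Matrix (Fin n) (Fin n) ℝ → ℝ)
    (hν0 : ∀ M, ν M = 0 ↔ M = 0)
    (hνadd : ∀ M N, ν (M + N) ≤ ν M + ν N)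
    (hνsmul : ∀ (a : ℝ) (M), ν (a • M) = |a| * ν M)
    (M : Matrix (Fin n) (Fin n) ℝ) : 0 ≤ ν M := by
  have h1 : ν (-M) = ν M := by
    have := hνsmul (-1) M
    simpa using this
  have h2 : ν (M + (-M)) ≤ ν M + ν (-M) := hνadd M (-M)
  rw [add_neg_cancel, (hν0 0).mpr rfl, h1] at h2
  linarith

-- every eigenvalue of a hermitian matrix is ≤ ν M
lemma eig_le_nu {n : ℕ} (ν : Matrix (Fin n) (Fin n) ℝ → ℝ)
    (hν0 : ∀ M, ν M = 0 ↔ M = 0)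
    (hνadd : ∀ M N, ν (M + N) ≤ ν M + ν N)
    (hνsmul : ∀ (a : ℝ) (M), ν (a • M) = |a| * ν M)
    (hνmul : ∀ M N, ν (M * N) ≤ ν M * ν N)
    (M : Matrix (Fin n) (Fin n) ℝ) (hM : M.IsHermitian) (i : Fin n) :
    hM.eigenvalues i ≤ ν M := by
  set lam := hM.eigenvalues i with hlam
  set v : Fin n → ℝ := ⇑(hM.eigenvectorBasis i) with hv
  have hMv : M *ᵥ v = lam • v := hM.mulVec_eigenvectorBasis i
  have hvne : v ≠ 0 := by
    intro h
    have h1 : (hM.eigenvectorBasis i : EuclideanSpace ℝ (Fin n)) = 0 := by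
      apply PiLp.ext; intro j; exact congrFun h j
    have h2 := hM.eigenvectorBasis.orthonormal.1 i
    rw [h1, norm_zero] at h2
    exact zero_ne_one h2
  set V : Matrix (Fin n) (Fin n) ℝ := vecMulVec v v with hV
  have hVne : V ≠ 0 := by
    intro h
    apply hvne
    funext j
    have h2 : v j * v j = 0 := by
      have h3 := congrFun (congrFun h j) j
      rw [hV, vecMulVec_apply] at h3
      exact h3
    exact mul_self_eq_zero.mp h2
  have hMV : M * V = lam • V := by
    ext j k
    simp only [mul_apply, hV, vecMulVec_apply, Matrix.smul_apply, smul_eq_mul]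
    have : ∑ l, M j l * (v l * v k) = (M *ᵥ v) j * v k := by
      simp [mulVec, dotProduct, Finset.sum_mul, mul_assoc]
    rw [this, hMv]
    simp [mul_assoc]
  have h1 : |lam| * ν V ≤ ν M * ν V := by
    calc |lam| * ν V = ν (lam • V) := (hνsmul lam V).symm
    _ = ν (M * V) := by rw [hMV]
    _ ≤ ν M * ν V := hνmul M V
  have hVpos : 0 < ν V := by
    rcases lt_or_eq_of_le (nu_nonneg ν hν0 hνadd hνsmul V) with h | h
    · exact h
    · exact absurd ((hν0 V).mp h.symm) hVne
  have : |lam| ≤ ν M := le_of_mul_le_mul_right h1 hVpos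
  exact (abs_le.mp this).2

-- quadratic form bound
lemma quad_le_nu {n : ℕ} (ν : Matrix (Fin n) (Fin n) ℝ → ℝ)
    (hν0 : ∀ M, ν M = 0 ↔ M = 0)
    (hνadd : ∀ M N, ν (M + N) ≤ ν M + ν N)
    (hνsmul : ∀ (a : ℝ) (M), ν (a • M) = |a| * ν M)
    (hνmul : ∀ M N, ν (M * N) ≤ ν M * ν N)
    (M : Matrix (Fin n) (Fin n) ℝ) (hM : M.IsHermitian) (y : Fin n → ℝ) :
    y ⬝ᵥ (M *ᵥ y) ≤ ν M * (y ⬝ᵥ y) := by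
  classical
  set U : Matrix (Fin n) (Fin n) ℝ := (hM.eigenvectorUnitary : Matrix (Fin n) (Fin n) ℝ) with hU
  have hUU : U * star U = 1 := (Matrix.mem_unitaryGroup_iff).mp hM.eigenvectorUnitary.2
  have hstar : star U = Uᵀ := by ext j k; simp [conjTranspose_apply]
  have hUU' : U * Uᵀ = 1 := by rw [← hstar]; exact hUU
  set D : Matrix (Fin n) (Fin n) ℝ := diagonal (RCLike.ofReal ∘ hM.eigenvalues) with hD
  have hspec : M = U * D * Uᵀ := by
    rw [hD, ← hstar]; exact hM.spectral_theorem
  set z : Fin n → ℝ := Uᵀ *ᵥ y with hz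
  have hzz : z ⬝ᵥ z = y ⬝ᵥ y := by
    rw [hz, dotProduct_mulVec, vecMul_transpose, mulVec_mulVec, hUU', one_mulVec]
  have hquad : y ⬝ᵥ (M *ᵥ y) = z ⬝ᵥ (D *ᵥ z) := by
    rw [hspec, ← mulVec_mulVec, ← mulVec_mulVec, dotProduct_mulVec, ← mulVec_transpose, ← hz]
  rw [hquad, ← hzz]
  have hdg : z ⬝ᵥ (D *ᵥ z) = ∑ j, hM.eigenvalues j * (z j * z j) := by
    simp only [hD, dotProduct, mulVec_diagonal, Function.comp_apply, RCLike.ofReal_real_eq_id,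
      id_eq]
    congr 1; funext j; ring
  rw [hdg]
  have hrhs : ν M * (z ⬝ᵥ z) = ∑ j, ν M * (z j * z j) := by
    simp [dotProduct, Finset.mul_sum]
  rw [hrhs]
  apply Finset.sum_le_sum
  intro j _
  exact mul_le_mul_of_nonneg_right (eig_le_nu ν hν0 hνadd hνsmul hνmul M hM j)
    (mul_self_nonneg _)


/-- Sufficient condition for regularity: if `ν` is a submultiplicative matrix
norm and `A_cᵀ A_c - ν(Δᵀ Δ) • I` is positive definite, then every matrix in
`[A_c - Δ, A_c + Δ]` is invertible. -/
theorem regular_of_norm_condition {n : ℕ} (Ac Δ : Matrix (Fin n) (Fin n) ℝ)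
    (hΔ : ∀ i j, 0 ≤ Δ i j)
    (ν : Matrix (Fin n) (Fin n) ℝ → ℝ)
    (hν0 : ∀ M, ν M = 0 ↔ M = 0)
    (hνadd : ∀ M N, ν (M + N) ≤ ν M + ν N)
    (hνsmul : ∀ (a : ℝ) (M), ν (a • M) = |a| * ν M)
    (hνmul : ∀ M N, ν (M * N) ≤ ν M * ν N)
    (hPD : (Ac.transpose * Ac - ν (Δ.transpose * Δ) • (1 : Matrix (Fin n) (Fin n) ℝ)).PosDef) :
    ∀ A : Matrix (Fin n) (Fin n) ℝ, (∀ i j, |A i j - Ac i j| ≤ Δ i j) → IsUnit A := by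
  intro A hA
  by_contra hAu
  have hdet : A.det = 0 := by
    by_contra hd
    exact hAu ((Matrix.isUnit_iff_isUnit_det A).mpr (isUnit_iff_ne_zero.mpr hd))
  obtain ⟨x, hx0, hAx⟩ := Matrix.exists_mulVec_eq_zero_iff.mpr hdet
  set c := ν (Δᵀ * Δ) with hc
  -- positivity hypothesis at x
  have hpos := hPD.dotProduct_mulVec_pos hx0
  rw [star_trivial] at hpos
  rw [Matrix.sub_mulVec, Matrix.smul_mulVec, Matrix.one_mulVec, dotProduct_sub,
    dotProduct_smul, smul_eq_mul] at hpos
  -- rewrite the quadratic form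
  have h1 : x ⬝ᵥ ((Acᵀ * Ac) *ᵥ x) = (Ac *ᵥ x) ⬝ᵥ (Ac *ᵥ x) := by
    rw [← Matrix.mulVec_mulVec, Matrix.dotProduct_mulVec, Matrix.vecMul_transpose]
  have hAcx : Ac *ᵥ x = -((A - Ac) *ᵥ x) := by
    rw [Matrix.sub_mulVec, hAx]
    simp
  set w : Fin n → ℝ := (A - Ac) *ᵥ x with hw
  have h2 : (Ac *ᵥ x) ⬝ᵥ (Ac *ᵥ x) = w ⬝ᵥ w := by
    rw [hAcx]
    simp [neg_dotProduct, dotProduct_neg]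
  set xa : Fin n → ℝ := fun k => |x k| with hxa
  have hwb : ∀ j, |w j| ≤ (Δ *ᵥ xa) j := by
    intro j
    calc |w j| = |∑ k, (A - Ac) j k * x k| := by rw [hw]; rfl
    _ ≤ ∑ k, |(A - Ac) j k * x k| := Finset.abs_sum_le_sum_abs _ _
    _ ≤ ∑ k, Δ j k * |x k| := by
        apply Finset.sum_le_sum
        intro k _
        rw [abs_mul]
        exact mul_le_mul_of_nonneg_right (by simpa using hA j k) (abs_nonneg _)
    _ = (Δ *ᵥ xa) j := rfl
  have h3 : w ⬝ᵥ w ≤ (Δ *ᵥ xa) ⬝ᵥ (Δ *ᵥ xa) := by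
    apply Finset.sum_le_sum
    intro j _
    calc w j * w j = |w j| * |w j| := (abs_mul_abs_self _).symm
    _ ≤ (Δ *ᵥ xa) j * (Δ *ᵥ xa) j :=
        mul_self_le_mul_self (abs_nonneg _) (hwb j)
  have h4 : (Δ *ᵥ xa) ⬝ᵥ (Δ *ᵥ xa) = xa ⬝ᵥ ((Δᵀ * Δ) *ᵥ xa) := by
    symm
    rw [← Matrix.mulVec_mulVec, Matrix.dotProduct_mulVec, Matrix.vecMul_transpose]
  have hherm : (Δᵀ * Δ).IsHermitian := by
    have h := Matrix.isHermitian_conjTranspose_mul_self Δ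
    have : Δᴴ = Δᵀ := by ext j k; simp [Matrix.conjTranspose_apply]
    rwa [this] at h
  have h5 : xa ⬝ᵥ ((Δᵀ * Δ) *ᵥ xa) ≤ c * (xa ⬝ᵥ xa) :=
    quad_le_nu ν hν0 hνadd hνsmul hνmul (Δᵀ * Δ) hherm xa
  have h6 : xa ⬝ᵥ xa = x ⬝ᵥ x := by
    simp [dotProduct, hxa, abs_mul_abs_self]
  rw [h1, h2] at hpos
  rw [h6] at h5
  linarith
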